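/- Let n ≥ 4 and let V be the real vector space of symmetric n×n real matrices with zero diagonal. The U-centering map T : V → V, T(A) = Ã, is a well-defined linear map satisfying T∘T = T, and the dimension of its range equals n(n−3)/2. -/

import Mathlib

open Finset Matrix

/-- The `𝒰`-centered version `Ã` of an `n × n` real matrix `A`:
`ã_{st} = a_{st} − (1/(n−2))·Σ_v a_{sv} − (1/(n−2))·Σ_u a_{ut}
          + (1/((n−1)(n−2)))·Σ_{u,v} a_{uv}` for `s ≠ t`, and `ã_{ss} = 0`. -/
noncomputable def uCenter {n : ℕ} (A : Matrix (Fin n) (Fin n) ℝ) :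
    Matrix (Fin n) (Fin n) ℝ := fun s t =>
  if s = t then 0 else
    A s t - (∑ v, A s v) / ((n : ℝ) - 2) - (∑ u, A u t) / ((n : ℝ) - 2)
      + (∑ u, ∑ v, A u v) / (((n : ℝ) - 1) * ((n : ℝ) - 2))


/-- The real vector space `V` of symmetric `n × n` real matrices with zero diagonal,
as a submodule of the space of all `n × n` real matrices. -/
def symZeroDiag (n : ℕ) : Submodule ℝ (Matrix (Fin n) (Fin n) ℝ) where
  carrier := {A | Aᵀ = A ∧ ∀ s, A s s = 0}
  add_mem' := by
    rintro A B ⟨hA1, hA2⟩ ⟨hB1, hB2⟩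
    refine ⟨by rw [Matrix.transpose_add, hA1, hB1], fun s => ?_⟩
    simp [Matrix.add_apply, hA2 s, hB2 s]
  zero_mem' := ⟨by simp, fun s => rfl⟩
  smul_mem' := by
    rintro c A ⟨h1, h2⟩
    refine ⟨by rw [Matrix.transpose_smul, h1], fun s => ?_⟩
    simp [Matrix.smul_apply, h2 s]

lemma sum_ite_diag {n : ℕ} (s : Fin n) (f : Fin n → ℝ) :
    ∑ t, (if s = t then 0 else f t) = (∑ t, f t) - f s := by
  have h1 : ∑ t ∈ univ.erase s, (if s = t then 0 else f t) = ∑ t ∈ univ.erase s, f t :=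
    Finset.sum_congr rfl fun t ht => if_neg (Ne.symm (Finset.ne_of_mem_erase ht))
  rw [← Finset.add_sum_erase _ _ (Finset.mem_univ s), if_pos rfl, zero_add, h1,
    Finset.sum_erase_eq_sub (Finset.mem_univ s)]

lemma symm_apply {n : ℕ} {A : Matrix (Fin n) (Fin n) ℝ} (hA : A ∈ symZeroDiag n)
    (s t : Fin n) : A t s = A s t := by
  conv_lhs => rw [← hA.1]
  rfl

lemma uCenter_mem {n : ℕ} {A : Matrix (Fin n) (Fin n) ℝ} (hA : A ∈ symZeroDiag n) :
    uCenter A ∈ symZeroDiag n := by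
  refine ⟨?_, fun s => if_pos rfl⟩
  ext s t
  simp only [transpose_apply, uCenter]
  rcases eq_or_ne s t with rfl | h
  · simp
  · rw [if_neg (Ne.symm h), if_neg h, symm_apply hA s t]
    have h1 : ∑ v, A t v = ∑ v, A v t := Finset.sum_congr rfl fun v _ => symm_apply hA v t
    have h2 : ∑ u, A u s = ∑ u, A s u := Finset.sum_congr rfl fun u _ => (symm_apply hA u s).symm
    rw [h1, h2]
    ring

lemma uCenter_add {n : ℕ} (A B : Matrix (Fin n) (Fin n) ℝ) :
    uCenter (A + B) = uCenter A + uCenter B := by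
  ext s t
  simp only [uCenter, Matrix.add_apply]
  rcases eq_or_ne s t with rfl | h
  · simp
  · simp only [if_neg h, Finset.sum_add_distrib]
    ring

lemma uCenter_smul {n : ℕ} (c : ℝ) (A : Matrix (Fin n) (Fin n) ℝ) :
    uCenter (c • A) = c • uCenter A := by
  ext s t
  simp only [uCenter, Matrix.smul_apply, smul_eq_mul, ← Finset.mul_sum]
  rcases eq_or_ne s t with rfl | h
  · simp
  · simp only [if_neg h]
    ring

noncomputable def Tmap (n : ℕ) : symZeroDiag n →ₗ[ℝ] symZeroDiag n where
  toFun A := ⟨uCenter A.1, uCenter_mem A.2⟩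
  map_add' A B := by
    ext : 1
    exact uCenter_add A.1 B.1
  map_smul' c A := by
    ext : 1
    exact uCenter_smul c A.1

lemma rowsum_uCenter {n : ℕ} (hn : 4 ≤ n) {A : Matrix (Fin n) (Fin n) ℝ}
    (hA : A ∈ symZeroDiag n) (s : Fin n) : ∑ t, uCenter A s t = 0 := by
  have h4 : (4:ℝ) ≤ (n:ℝ) := by exact_mod_cast hn
  have hn2 : ((n:ℝ) - 2) ≠ 0 := by linarith
  have hn1 : ((n:ℝ) - 1) ≠ 0 := by linarith
  set R := ∑ v, A s v with hR
  set S := ∑ u, ∑ v, A u v with hS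
  have hstep : ∑ t, uCenter A s t =
      (∑ t, (A s t - R/((n:ℝ)-2) - (∑ u, A u t)/((n:ℝ)-2) + S/(((n:ℝ)-1)*((n:ℝ)-2))))
      - (A s s - R/((n:ℝ)-2) - (∑ u, A u s)/((n:ℝ)-2) + S/(((n:ℝ)-1)*((n:ℝ)-2))) := by
    rw [← sum_ite_diag s]
    rfl
  have hCs : (∑ u, A u s) = R := Finset.sum_congr rfl fun u _ => symm_apply hA s u
  have hsumC : ∑ t : Fin n, ∑ u : Fin n, A u t = S := Finset.sum_comm
  rw [hstep, hA.2 s, hCs]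
  rw [Finset.sum_add_distrib, Finset.sum_sub_distrib, Finset.sum_sub_distrib,
    Finset.sum_const, Finset.sum_const, ← Finset.sum_div, hsumC, ← hR,
    Finset.card_univ, Fintype.card_fin, nsmul_eq_mul, nsmul_eq_mul]
  field_simp
  ring

lemma uCenter_fixed {n : ℕ} {A : Matrix (Fin n) (Fin n) ℝ} (hA : A ∈ symZeroDiag n)
    (h0 : ∀ s, ∑ t, A s t = 0) : uCenter A = A := by
  have hcol : ∀ t, (∑ u, A u t) = 0 := fun t => by
    rw [Finset.sum_congr rfl fun u _ => symm_apply hA t u]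
    exact h0 t
  have htot : (∑ u, ∑ v, A u v) = 0 := by
    rw [Finset.sum_congr rfl fun u _ => h0 u]
    simp
  ext s t
  rcases eq_or_ne s t with rfl | h
  · rw [hA.2 s]
    exact if_pos rfl
  · show (if s = t then _ else _) = _
    rw [if_neg h, h0 s, hcol t, htot]
    ring

lemma Tmap_idem (n : ℕ) (hn : 4 ≤ n) : Tmap n ∘ₗ Tmap n = Tmap n := by
  ext A : 2
  show uCenter (uCenter A.1) = uCenter A.1
  exact uCenter_fixed (uCenter_mem A.2) (rowsum_uCenter hn A.2)

noncomputable def fromPairs {n : ℕ} (f : {p : Fin n × Fin n // p.1 < p.2} → ℝ) :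
    Matrix (Fin n) (Fin n) ℝ := fun s t =>
  if h : s < t then f ⟨(s, t), h⟩ else if h' : t < s then f ⟨(t, s), h'⟩ else 0

lemma fromPairs_mem {n : ℕ} (f : {p : Fin n × Fin n // p.1 < p.2} → ℝ) :
    fromPairs f ∈ symZeroDiag n := by
  constructor
  · ext s t
    show fromPairs f t s = fromPairs f s t
    unfold fromPairs
    rcases lt_trichotomy s t with h | rfl | h
    · rw [dif_neg (asymm h), dif_pos h, dif_pos h]
    · rfl
    · rw [dif_pos h, dif_neg (asymm h), dif_pos h]
  · intro s
    show (if h : s < s then _ else if h' : s < s then _ else (0:ℝ)) = 0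
    rw [dif_neg (lt_irrefl s), dif_neg (lt_irrefl s)]

noncomputable def pairEquiv (n : ℕ) :
    symZeroDiag n ≃ₗ[ℝ] ({p : Fin n × Fin n // p.1 < p.2} → ℝ) where
  toFun A := fun p => A.1 p.1.1 p.1.2
  map_add' A B := rfl
  map_smul' c A := rfl
  invFun f := ⟨fromPairs f, fromPairs_mem f⟩
  left_inv A := by
    ext s t
    show fromPairs (fun p => A.1 p.1.1 p.1.2) s t = A.1 s t
    unfold fromPairs
    rcases lt_trichotomy s t with h | rfl | h
    · rw [dif_pos h]
    · rw [dif_neg (lt_irrefl s), dif_neg (lt_irrefl s), A.2.2 s]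
    · rw [dif_neg (asymm h), dif_pos h]
      exact symm_apply A.2 s t
  right_inv f := by
    funext p
    show fromPairs f p.1.1 p.1.2 = f p
    unfold fromPairs
    rw [dif_pos p.2]

lemma finrank_symZeroDiag (n : ℕ) :
    Module.finrank ℝ (symZeroDiag n) = n * (n - 1) / 2 := by
  rw [(pairEquiv n).finrank_eq, Module.finrank_fintype_fun_eq_card]
  rw [Fintype.card_subtype]
  have h1 : (univ.filter fun p : Fin n × Fin n => p.1 < p.2).card
      = ∑ j : Fin n, (univ.filter fun i : Fin n => i < j).card := by
    rw [Finset.card_filter, Fintype.sum_prod_type_right]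
    congr 1
    funext j
    rw [Finset.card_filter]
  have h2 : ∀ j : Fin n, (univ.filter fun i : Fin n => i < j).card = (j : ℕ) := by
    intro j
    rw [Finset.filter_gt_eq_Iio, Fin.card_Iio]
  rw [h1]
  simp only [h2]
  rw [Fin.sum_univ_eq_sum_range (fun m => m) n, Finset.sum_range_id]

noncomputable def rowSum (n : ℕ) : symZeroDiag n →ₗ[ℝ] (Fin n → ℝ) where
  toFun A := fun s => ∑ t, A.1 s t
  map_add' A B := by
    funext s
    simp [Matrix.add_apply, Finset.sum_add_distrib]
  map_smul' c A := by
    funext s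
    simp [Matrix.smul_apply, Finset.mul_sum]

lemma rowSum_surj (n : ℕ) (hn : 4 ≤ n) : Function.Surjective (rowSum n) := by
  have h4 : (4:ℝ) ≤ (n:ℝ) := by exact_mod_cast hn
  have hn2 : ((n:ℝ) - 2) ≠ 0 := by linarith
  have hn1 : ((n:ℝ) - 1) ≠ 0 := by linarith
  intro c
  set Sc := ∑ u, c u with hSc
  set M : Matrix (Fin n) (Fin n) ℝ := fun s t =>
    if s = t then 0 else (c s + c t)/((n:ℝ)-2) - Sc/(((n:ℝ)-1)*((n:ℝ)-2)) with hM
  have hMmem : M ∈ symZeroDiag n := by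
    constructor
    · ext s t
      show M t s = M s t
      rcases eq_or_ne s t with rfl | h
      · rfl
      · show (if t = s then _ else _) = (if s = t then _ else _)
        rw [if_neg (Ne.symm h), if_neg h]
        ring
    · intro s
      exact if_pos rfl
  refine ⟨⟨M, hMmem⟩, ?_⟩
  funext s
  show ∑ t, M s t = c s
  have hstep : ∑ t, M s t =
      (∑ t, ((c s + c t)/((n:ℝ)-2) - Sc/(((n:ℝ)-1)*((n:ℝ)-2))))
      - ((c s + c s)/((n:ℝ)-2) - Sc/(((n:ℝ)-1)*((n:ℝ)-2))) := by
    rw [← sum_ite_diag s]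
  rw [hstep, Finset.sum_sub_distrib, Finset.sum_const, ← Finset.sum_div,
    Finset.sum_add_distrib, Finset.sum_const, ← hSc,
    Finset.card_univ, Fintype.card_fin, nsmul_eq_mul, nsmul_eq_mul]
  field_simp
  ring

lemma range_Tmap (n : ℕ) (hn : 4 ≤ n) :
    LinearMap.range (Tmap n) = LinearMap.ker (rowSum n) := by
  apply le_antisymm
  · rintro B ⟨A, rfl⟩
    show rowSum n (Tmap n A) = 0
    funext s
    exact rowsum_uCenter hn A.2 s
  · intro A hA
    refine ⟨A, ?_⟩
    have h0 : ∀ s, ∑ t, A.1 s t = 0 := fun s => congrFun (LinearMap.mem_ker.mp hA) s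
    exact Subtype.ext (uCenter_fixed A.2 h0)

/-- For `n ≥ 4`, `𝒰`-centering is a well-defined linear map
`T : V → V` on the space `V` of symmetric `n × n` matrices with zero diagonal, it is
idempotent (`T ∘ T = T`), and the dimension of its range is `n(n−3)/2`. -/
theorem uCenter_linear_idempotent_rank (n : ℕ) (hn : 4 ≤ n) :
    ∃ T : symZeroDiag n →ₗ[ℝ] symZeroDiag n,
      (∀ A : symZeroDiag n, (T A : Matrix (Fin n) (Fin n) ℝ) = uCenter (A : Matrix (Fin n) (Fin n) ℝ)) ∧
      T ∘ₗ T = T ∧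
      Module.finrank ℝ (LinearMap.range T) = n * (n - 3) / 2 := by
  refine ⟨Tmap n, fun A => rfl, Tmap_idem n hn, ?_⟩
  rw [range_Tmap n hn]
  have hr := (rowSum n).finrank_range_add_finrank_ker
  rw [LinearMap.range_eq_top.mpr (rowSum_surj n hn), finrank_top,
    Module.finrank_fintype_fun_eq_card, Fintype.card_fin, finrank_symZeroDiag] at hr
  obtain ⟨m, rfl⟩ : ∃ m, n = m + 4 := ⟨n - 4, by omega⟩
  have d1 : m + 4 - 1 = m + 3 := by omega
  have d3 : m + 4 - 3 = m + 1 := by omega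
  rw [d1] at hr
  rw [d3]
  have e : (m+4)*(m+3) = (m+4)*(m+1) + 2*(m+4) := by ring
  generalize hb : (m+4)*(m+1) = b at e ⊢
  generalize ha : (m+4)*(m+3) = a at e hr
  omega
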